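/- For all x, y in V, one has max(‖⟨x, y⟩‖_A, ‖θ_{x,y}‖) ≤ 4 Ω(x) Ω(y), where θ_{x,y} : V → V is the bounded linear operator θ_{x,y}(z) = x⟨y, z⟩ and ‖θ_{x,y}‖ is its operator norm. -/

import Mathlib

/-!
Setting: `A` is a C*-algebra and `V` is a Hilbert C*-module over `A`.
`WithCStarModule (A × V)` is the Hilbert `A`-module `A ⊕ V`, with inner product
`⟪(a, y), (b, z)⟫ = a * b + ⟪y, z⟫` and norm `‖(a, y)‖ = ‖a * a + ⟪y, y⟫‖ ^ (1/2)`
(both provided by Mathlib).  For `x : V` and `lam : ℂ` with `|lam| = 1`, the operator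
`M_{x,lam} : A ⊕ V → A ⊕ V`, `(a, y) ↦ (conj lam • ⟪x, y⟫, lam • (x <• a))` is encoded
by a family `M` of continuous linear maps satisfying the predicate `IsM` below, and the
numerical radius is `numRadius M x = (1/2) * sup_{|lam| = 1} ‖M x lam‖`.
-/

open scoped RightActions InnerProductSpace

noncomputable section

variable {A V : Type*} [NonUnitalCStarAlgebra A] [PartialOrder A] [StarOrderedRing A]
  [NormedAddCommGroup V] [NormedSpace ℂ V] [SMul Aᵐᵒᵖ V] [CStarModule Aᵐᵒᵖ V] [CompleteSpace V]

/-- The element of the Hilbert `A`-module `A ⊕ V` with components `a : A` and `y : V`. -/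
def pairElem (a : A) (y : V) : WithCStarModule Aᵐᵒᵖ (Aᵐᵒᵖ × V) :=
  (WithCStarModule.equiv Aᵐᵒᵖ (Aᵐᵒᵖ × V)).symm (MulOpposite.op a, y)

/-- `IsM M` asserts that for every `x : V` and every unimodular `lam : ℂ`, the continuous
linear map `M x lam` is the operator `M_{x,lam} : (a, y) ↦ (conj lam • ⟪x, y⟫, lam • (x <• a))`
on `A ⊕ V`. -/
def IsM (M : V → ℂ → (WithCStarModule Aᵐᵒᵖ (Aᵐᵒᵖ × V) →L[ℂ] WithCStarModule Aᵐᵒᵖ (Aᵐᵒᵖ × V))) : Prop :=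
  ∀ (x : V) (lam : ℂ), ‖lam‖ = 1 → ∀ (a : A) (y : V),
    M x lam (pairElem a y) = pairElem ((starRingEnd ℂ) lam • MulOpposite.unop (inner Aᵐᵒᵖ x y)) (lam • (x <• a))

/-- The numerical radius `Ω(x) = (1/2) * sup_{|lam| = 1} ‖M_{x,lam}‖`. -/
def numRadius (M : V → ℂ → (WithCStarModule Aᵐᵒᵖ (Aᵐᵒᵖ × V) →L[ℂ] WithCStarModule Aᵐᵒᵖ (Aᵐᵒᵖ × V)))
    (x : V) : ℝ :=
  (1 / 2) * sSup ((fun lam : ℂ => ‖M x lam‖) '' {lam : ℂ | ‖lam‖ = 1})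

/-- `IsTheta Θ` asserts that for all `x y : V`, the continuous linear map `Θ x y` is the
"compact" operator `θ_{x,y} : V → V`, `z ↦ x <• ⟪y, z⟫`. -/
def IsTheta (Θ : V → V → (V →L[ℂ] V)) : Prop :=
  ∀ (x y z : V), Θ x y z = x <• MulOpposite.unop (inner Aᵐᵒᵖ y z)

set_option linter.unusedSectionVars false

lemma norm_op_smul_le' (x : V) (a : A) : ‖x <• a‖ ≤ ‖x‖ * ‖a‖ := by
  have h2 : ‖x <• a‖ ^ 2 ≤ (‖x‖ * ‖a‖) ^ 2 := by
    rw [CStarModule.norm_sq_eq (A := Aᵐᵒᵖ)]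
    calc ‖inner Aᵐᵒᵖ (x <• a) (x <• a)‖ = ‖star a * (MulOpposite.unop (inner Aᵐᵒᵖ x x) * a)‖ := by
          rw [CStarModule.inner_op_smul_left, CStarModule.inner_op_smul_right]; rfl
      _ ≤ ‖star a‖ * (‖MulOpposite.unop (inner Aᵐᵒᵖ x x)‖ * ‖a‖) :=
          (norm_mul_le _ _).trans (by gcongr; exact norm_mul_le _ _)
      _ = (‖x‖ * ‖a‖) ^ 2 := by rw [norm_star, MulOpposite.norm_unop, ← CStarModule.norm_sq_eq (A := Aᵐᵒᵖ)]; ring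
  exact (pow_le_pow_iff_left₀ (norm_nonneg _) (by positivity) two_ne_zero).mp h2

lemma pairElem_fst (a : A) (y : V) : (pairElem a y).1 = MulOpposite.op a := rfl
lemma pairElem_snd (a : A) (y : V) : (pairElem a y).2 = y := rfl

lemma pairElem_eta (v : WithCStarModule Aᵐᵒᵖ (Aᵐᵒᵖ × V)) : pairElem v.1.unop v.2 = v := rfl

lemma norm_pairElem_le (a : A) (y : V) : ‖pairElem a y‖ ≤ ‖a‖ + ‖y‖ :=
  WithCStarModule.prod_norm_le_norm_add _

lemma fst_le_norm_pairElem (a : A) (y : V) : ‖a‖ ≤ ‖pairElem a y‖ :=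
  le_trans (le_max_left _ _) (WithCStarModule.max_le_prod_norm (pairElem a y))

lemma norm_pairElem_zero (y : V) : ‖(pairElem 0 y : WithCStarModule Aᵐᵒᵖ (Aᵐᵒᵖ × V))‖ = ‖y‖ := by
  rw [WithCStarModule.prod_norm]
  simp [pairElem_fst, pairElem_snd, CStarModule.norm_eq_sqrt_norm_inner_self (A := Aᵐᵒᵖ) y]

lemma M_opNorm_le (M : V → ℂ → (WithCStarModule Aᵐᵒᵖ (Aᵐᵒᵖ × V) →L[ℂ] WithCStarModule Aᵐᵒᵖ (Aᵐᵒᵖ × V)))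
    (hM : IsM M) (x : V) (lam : ℂ) (hlam : ‖lam‖ = 1) : ‖M x lam‖ ≤ 2 * ‖x‖ := by
  apply ContinuousLinearMap.opNorm_le_bound _ (by positivity)
  intro v
  rw [← pairElem_eta v, hM x lam hlam v.1.unop v.2]
  have hv1 : ‖v.1.unop‖ ≤ ‖v‖ := le_trans (le_max_left _ _) (WithCStarModule.max_le_prod_norm v)
  have hv2 : ‖v.2‖ ≤ ‖v‖ := le_trans (le_max_right _ _) (WithCStarModule.max_le_prod_norm v)
  calc ‖pairElem ((starRingEnd ℂ) lam • MulOpposite.unop (inner Aᵐᵒᵖ x v.2)) (lam • (x <• v.1.unop))‖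
      ≤ ‖(starRingEnd ℂ) lam • MulOpposite.unop (inner Aᵐᵒᵖ x v.2)‖ + ‖lam • (x <• v.1.unop)‖ := norm_pairElem_le _ _
    _ = ‖MulOpposite.unop (inner Aᵐᵒᵖ x v.2)‖ + ‖x <• v.1.unop‖ := by
        rw [norm_smul, norm_smul, RCLike.norm_conj, hlam, one_mul, one_mul]
    _ ≤ ‖x‖ * ‖v.2‖ + ‖x‖ * ‖v.1.unop‖ := by
        gcongr
        · rw [MulOpposite.norm_unop]; exact CStarModule.norm_inner_le V
        · exact norm_op_smul_le' x v.1.unop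
    _ ≤ ‖x‖ * ‖v‖ + ‖x‖ * ‖v‖ := by gcongr
    _ = 2 * ‖x‖ * ‖v‖ := by ring

lemma norm_le_two_numRadius (M : V → ℂ → (WithCStarModule Aᵐᵒᵖ (Aᵐᵒᵖ × V) →L[ℂ] WithCStarModule Aᵐᵒᵖ (Aᵐᵒᵖ × V)))
    (hM : IsM M) (x : V) : ‖x‖ ≤ 2 * numRadius M x := by
  have hbdd : BddAbove ((fun lam : ℂ => ‖M x lam‖) '' {lam : ℂ | ‖lam‖ = 1}) := by
    refine ⟨2 * ‖x‖, ?_⟩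
    rintro _ ⟨lam, hlam, rfl⟩
    exact M_opNorm_le M hM x lam hlam
  have hmem : ‖M x 1‖ ∈ (fun lam : ℂ => ‖M x lam‖) '' {lam : ℂ | ‖lam‖ = 1} :=
    ⟨1, by simp, rfl⟩
  have hle : ‖M x 1‖ ≤ sSup ((fun lam : ℂ => ‖M x lam‖) '' {lam : ℂ | ‖lam‖ = 1}) :=
    le_csSup hbdd hmem
  have hx : ‖x‖ ≤ ‖M x 1‖ := by
    rcases eq_or_ne x 0 with rfl | hx0
    · rw [norm_zero]; exact norm_nonneg (M 0 1)
    · have key := (M x 1).le_opNorm (pairElem 0 x)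
      rw [hM x 1 (by simp) 0 x, norm_pairElem_zero] at key
      have h1 : ‖MulOpposite.unop (inner Aᵐᵒᵖ x x)‖ ≤ ‖pairElem ((starRingEnd ℂ) 1 • MulOpposite.unop (inner Aᵐᵒᵖ x x)) ((1:ℂ) • (x <• (0:A)))‖ := by
        have := fst_le_norm_pairElem ((starRingEnd ℂ) 1 • MulOpposite.unop (inner Aᵐᵒᵖ x x)) ((1:ℂ) • (x <• (0:A)))
        simpa using this
      have h2 : ‖x‖ ^ 2 ≤ ‖M x 1‖ * ‖x‖ := by
        rw [CStarModule.norm_sq_eq (A := Aᵐᵒᵖ)]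
        exact h1.trans key
      have hxpos : 0 < ‖x‖ := norm_pos_iff.mpr hx0
      nlinarith
  have : 2 * numRadius M x = sSup ((fun lam : ℂ => ‖M x lam‖) '' {lam : ℂ | ‖lam‖ = 1}) := by
    rw [numRadius]; ring
  rw [this]
  exact hx.trans hle

theorem stmt13 (M : V → ℂ → (WithCStarModule Aᵐᵒᵖ (Aᵐᵒᵖ × V) →L[ℂ] WithCStarModule Aᵐᵒᵖ (Aᵐᵒᵖ × V))) (hM : IsM M) (Θ : V → V → (V →L[ℂ] V)) (hΘ : IsTheta (A := A) Θ) (x y : V) :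
    max ‖MulOpposite.unop (inner Aᵐᵒᵖ x y)‖ ‖Θ x y‖ ≤ 4 * numRadius M x * numRadius M y := by
  have hx := norm_le_two_numRadius M hM x
  have hy := norm_le_two_numRadius M hM y
  have hΘle : ‖Θ x y‖ ≤ ‖x‖ * ‖y‖ := by
    apply ContinuousLinearMap.opNorm_le_bound _ (by positivity)
    intro z
    rw [hΘ x y z]
    calc ‖x <• MulOpposite.unop (inner Aᵐᵒᵖ y z)‖ ≤ ‖x‖ * ‖MulOpposite.unop (inner Aᵐᵒᵖ y z)‖ := norm_op_smul_le' _ _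
      _ ≤ ‖x‖ * (‖y‖ * ‖z‖) := by gcongr; rw [MulOpposite.norm_unop]; exact CStarModule.norm_inner_le V
      _ = ‖x‖ * ‖y‖ * ‖z‖ := by ring
  have hinner : ‖MulOpposite.unop (inner Aᵐᵒᵖ x y)‖ ≤ ‖x‖ * ‖y‖ := (MulOpposite.norm_unop _).trans_le (CStarModule.norm_inner_le V)
  have hxy : ‖x‖ * ‖y‖ ≤ 4 * numRadius M x * numRadius M y := by
    nlinarith [norm_nonneg x, norm_nonneg y]
  exact max_le (hinner.trans hxy) (hΘle.trans hxy)
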